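/- arXiv:0707.3950 — 3 statements merged into one kernel-verified Lean document; each statement's English description precedes it below -/
import Mathlib

section
/- For every natural number n ≥ 1, the inequality 1/(2n + 1/(1−γ) − 2) ≤ H_n − ln n − γ < 1/(2n + 1/3) holds, with equality on the left only for n = 1. -/
open Real Filter Topology


lemma log_sym_upper {t : ℝ} (h0 : 0 < t) (h1 : t < 1) :
    Real.log ((1+t)/(1-t)) ≤ 2*t + 2*t^3/3 + 2*t^5/5 + 2*t^7/(1-t) := by
  have habs : |t| < 1 := by rw [abs_of_pos h0]; exact h1
  have habs' : |(-t)| < 1 := by rwa [abs_neg]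
  have A := Real.abs_log_sub_add_sum_range_le habs 6
  have B := Real.abs_log_sub_add_sum_range_le habs' 6
  simp only [Finset.sum_range_succ, Finset.sum_range_zero] at A B
  simp only [abs_neg, abs_of_pos h0] at A B
  rw [abs_le] at A B
  have h1t : (0:ℝ) < 1 - t := by linarith
  rw [Real.log_div (by positivity) (ne_of_gt h1t)]
  simp only [sub_neg_eq_add] at B
  obtain ⟨A1, A2⟩ := A
  obtain ⟨B1, B2⟩ := B
  push_cast at A1 A2 B1 B2
  ring_nf at A1 A2 B1 B2 ⊢
  linarith

lemma log_sym_lower {t : ℝ} (h0 : 0 < t) (h1 : t < 1) :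
    2*t + 2*t^3/3 + 2*t^5/5 - 2*t^7/(1-t) ≤ Real.log ((1+t)/(1-t)) := by
  have habs : |t| < 1 := by rw [abs_of_pos h0]; exact h1
  have habs' : |(-t)| < 1 := by rwa [abs_neg]
  have A := Real.abs_log_sub_add_sum_range_le habs 6
  have B := Real.abs_log_sub_add_sum_range_le habs' 6
  simp only [Finset.sum_range_succ, Finset.sum_range_zero] at A B
  simp only [abs_neg, abs_of_pos h0] at A B
  rw [abs_le] at A B
  have h1t : (0:ℝ) < 1 - t := by linarith
  rw [Real.log_div (by positivity) (ne_of_gt h1t)]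
  simp only [sub_neg_eq_add] at B
  obtain ⟨A1, A2⟩ := A
  obtain ⟨B1, B2⟩ := B
  push_cast at A1 A2 B1 B2
  ring_nf at A1 A2 B1 B2 ⊢
  linarith

noncomputable def dd (n : ℕ) : ℝ :=
  (harmonic n : ℝ) - Real.log n - Real.eulerMascheroniConstant

lemma dd_tendsto : Tendsto dd atTop (𝓝 0) := by
  have h := Real.tendsto_harmonic_sub_log.sub_const Real.eulerMascheroniConstant
  simp only [sub_self] at h
  exact h

lemma aux_tendsto (a : ℝ) : Tendsto (fun n : ℕ => 1/(2*(n:ℝ)+a)) atTop (𝓝 0) := by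
  have h : Tendsto (fun n : ℕ => 2*(n:ℝ)+a) atTop atTop := by
    apply tendsto_atTop_add_const_right
    exact (tendsto_natCast_atTop_atTop).const_mul_atTop two_pos
  simpa [one_div, Pi.inv_def] using h.inv_tendsto_atTop

lemma neg_of_strict (g : ℕ → ℝ) (N : ℕ) (hstep : ∀ k, N ≤ k → g k < g (k+1))
    (hlim : Tendsto g atTop (𝓝 0)) : ∀ n, N ≤ n → g n < 0 := by
  intro n hn
  have mono : ∀ m, n+1 ≤ m → g (n+1) ≤ g m := by
    intro m hm
    induction m with
    | zero => omega
    | succ p ih =>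
      rcases Nat.lt_or_ge (n+1) (p+1) with h | h
      · exact (ih (by omega)).trans (le_of_lt (hstep p (by omega)))
      · have : n+1 = p+1 := le_antisymm hm h
        rw [this]
  have hle : g (n+1) ≤ 0 :=
    ge_of_tendsto hlim (eventually_atTop.2 ⟨n+1, mono⟩)
  exact lt_of_lt_of_le (hstep n hn) hle

lemma dd_step (k : ℕ) (hk : 1 ≤ k) :
    dd k - dd (k+1) = Real.log (((k:ℝ)+1)/k) - 1/((k:ℝ)+1) := by
  have hk0 : (0:ℝ) < k := by exact_mod_cast hk
  have hk1 : (0:ℝ) < (k:ℝ)+1 := by linarith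
  unfold dd
  rw [Real.log_div (ne_of_gt hk1) (ne_of_gt hk0)]
  have hh : ((harmonic (k+1) : ℚ) : ℝ) = (harmonic k : ℝ) + 1/((k:ℝ)+1) := by
    rw [harmonic_succ]
    push_cast
    ring
  push_cast [hh]
  ring

lemma keyA (x : ℝ) (hx : 1 ≤ x) :
    Real.log ((x+1)/x) - 1/(x+1) < 1/(2*x+1/3) - 1/(2*x+2+1/3) := by
  have hx0 : (0:ℝ) < x := by linarith
  have hu : (0:ℝ) < 2*x+1 := by linarith
  have ht0 : 0 < 1/(2*x+1) := by positivity
  have ht1 : 1/(2*x+1) < 1 := by rw [div_lt_one hu]; linarith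
  have hlog := log_sym_upper ht0 ht1
  have h1t : (1:ℝ) - 1/(2*x+1) = 2*x/(2*x+1) := by field_simp; ring
  rw [h1t] at hlog
  have e1 : (1+1/(2*x+1))/(2*x/(2*x+1)) = (x+1)/x := by
    field_simp; ring
  rw [e1] at hlog
  have e2 : 2*(1/(2*x+1)) + 2*(1/(2*x+1))^3/3 + 2*(1/(2*x+1))^5/5
      + 2*(1/(2*x+1))^7/(2*x/(2*x+1))
      = 2/(2*x+1) + 2/(3*(2*x+1)^3) + 2/(5*(2*x+1)^5) + 1/(x*(2*x+1)^6) := by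
    field_simp
  rw [e2] at hlog
  have hy : (0:ℝ) ≤ x - 1 := by linarith
  have hnum : (0:ℝ) < 6819 + 37212*(x-1) + 74520*(x-1)^2 + 74960*(x-1)^3
      + 41256*(x-1)^4 + 11968*(x-1)^5 + 1440*(x-1)^6 := by
    have h2 := pow_nonneg hy 2
    have h3 := pow_nonneg hy 3
    have h4 := pow_nonneg hy 4
    have h5 := pow_nonneg hy 5
    have h6 := pow_nonneg hy 6
    nlinarith
  have hden : (0:ℝ) < 15*x*(2*x+1)^6*(x+1)*(6*x+1)*(6*x+7) := by positivity
  have key : (1/(2*x+1/3) - 1/(2*x+2+1/3))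
      - ((2/(2*x+1) + 2/(3*(2*x+1)^3) + 2/(5*(2*x+1)^5) + 1/(x*(2*x+1)^6)) - 1/(x+1))
      = (6819 + 37212*(x-1) + 74520*(x-1)^2 + 74960*(x-1)^3
      + 41256*(x-1)^4 + 11968*(x-1)^5 + 1440*(x-1)^6)
        / (15*x*(2*x+1)^6*(x+1)*(6*x+1)*(6*x+7)) := by
    field_simp
    ring
  have hq := div_pos hnum hden
  linarith [key, hq, hlog]

lemma keyB (x : ℝ) (hx : 2 ≤ x) (c : ℝ) (hc : 913/2500 ≤ c) :
    1/(2*x+c) - 1/(2*x+2+c) < Real.log ((x+1)/x) - 1/(x+1) := by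
  have hx0 : (0:ℝ) < x := by linarith
  have hu : (0:ℝ) < 2*x+1 := by linarith
  have ht0 : 0 < 1/(2*x+1) := by positivity
  have ht1 : 1/(2*x+1) < 1 := by rw [div_lt_one hu]; linarith
  have hlog := log_sym_lower ht0 ht1
  have h1t : (1:ℝ) - 1/(2*x+1) = 2*x/(2*x+1) := by field_simp; ring
  rw [h1t] at hlog
  have e1 : (1+1/(2*x+1))/(2*x/(2*x+1)) = (x+1)/x := by field_simp; ring
  rw [e1] at hlog
  have e2 : 2*(1/(2*x+1)) + 2*(1/(2*x+1))^3/3 + 2*(1/(2*x+1))^5/5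
      - 2*(1/(2*x+1))^7/(2*x/(2*x+1))
      = 2/(2*x+1) + 2/(3*(2*x+1)^3) + 2/(5*(2*x+1)^5) - 1/(x*(2*x+1)^6) := by
    field_simp
  rw [e2] at hlog
  -- monotonicity in c
  have hmono : 1/(2*x+c) - 1/(2*x+2+c) ≤ 1/(2*x+913/2500) - 1/(2*x+2+913/2500) := by
    have e : ∀ p : ℝ, 0 < p → 1/p - 1/(p+2) = 2/(p*(p+2)) := by
      intro p hp; field_simp; ring
    have hp1 : (0:ℝ) < 2*x+c := by linarith
    have hp2 : (0:ℝ) < 2*x+913/2500 := by linarith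
    rw [show (2*x+2+c : ℝ) = (2*x+c)+2 by ring, e _ hp1,
        show (2*x+2+913/2500 : ℝ) = (2*x+913/2500)+2 by ring, e _ hp2]
    gcongr
    all_goals nlinarith
  have hy : (0:ℝ) ≤ x - 2 := by linarith
  have hnum : (0:ℝ) < 28249018065 + 148300160408*(x-2) + 260742452110*(x-2)^2
      + 231875091448*(x-2)^3 + 117945427000*(x-2)^4 + 34946325760*(x-2)^5
      + 5631313120*(x-2)^6 + 382400000*(x-2)^7 := by
    have h2 := pow_nonneg hy 2
    have h3 := pow_nonneg hy 3
    have h4 := pow_nonneg hy 4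
    have h5 := pow_nonneg hy 5
    have h6 := pow_nonneg hy 6
    have h7 := pow_nonneg hy 7
    nlinarith
  have hden : (0:ℝ) < 6250000*(15*x*(2*x+1)^6*(x+1)*(2*x+913/2500)*(2*x+2+913/2500)) := by
    positivity
  have key : ((2/(2*x+1) + 2/(3*(2*x+1)^3) + 2/(5*(2*x+1)^5) - 1/(x*(2*x+1)^6)) - 1/(x+1))
      - (1/(2*x+913/2500) - 1/(2*x+2+913/2500))
      = (28249018065 + 148300160408*(x-2) + 260742452110*(x-2)^2
      + 231875091448*(x-2)^3 + 117945427000*(x-2)^4 + 34946325760*(x-2)^5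
      + 5631313120*(x-2)^6 + 382400000*(x-2)^7)
        / (6250000*(15*x*(2*x+1)^6*(x+1)*(2*x+913/2500)*(2*x+2+913/2500))) := by
    field_simp
    ring
  have hq := div_pos hnum hden
  linarith [key, hq, hlog, hmono]

lemma upper (n : ℕ) (hn : 1 ≤ n) : dd n < 1/(2*(n:ℝ)+1/3) := by
  have hstep : ∀ k, 1 ≤ k → (fun m : ℕ => dd m - 1/(2*(m:ℝ)+1/3)) k
      < (fun m : ℕ => dd m - 1/(2*(m:ℝ)+1/3)) (k+1) := by
    intro k hk
    have hx : (1:ℝ) ≤ (k:ℝ) := by exact_mod_cast hk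
    have h1 := keyA (k:ℝ) hx
    have h2 := dd_step k hk
    simp only
    push_cast
    have e : 2*((k:ℝ)+1)+1/3 = 2*(k:ℝ)+2+1/3 := by ring
    rw [e]
    linarith
  have hlim : Tendsto (fun m : ℕ => dd m - 1/(2*(m:ℝ)+1/3)) atTop (𝓝 0) := by
    simpa using dd_tendsto.sub (aux_tendsto (1/3))
  have h := neg_of_strict _ 1 hstep hlim n hn
  linarith

lemma gamma_lb : (3413/5913 : ℝ) ≤ Real.eulerMascheroniConstant := by
  have h := upper 16 (by norm_num)
  have h16 : ((harmonic 16 : ℚ) : ℝ) = 2436559/720720 := by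
    norm_num [harmonic, Finset.sum_range_succ]
  have hlog : Real.log (16:ℕ) = 4 * Real.log 2 := by
    push_cast
    rw [show (16:ℝ) = 2^(4:ℕ) by norm_num, Real.log_pow]
    norm_num
  have hl2 : Real.log 2 < 0.6931471808 := Real.log_two_lt_d9
  unfold dd at h
  rw [h16, hlog] at h
  push_cast at h
  nlinarith

lemma hc_bound : (913/2500 : ℝ) ≤ 1/(1-Real.eulerMascheroniConstant) - 2 := by
  have h1 := gamma_lb
  have h2 := Real.eulerMascheroniConstant_lt_two_thirds
  have h3 : (0:ℝ) < 1 - Real.eulerMascheroniConstant := by linarith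
  rw [le_sub_iff_add_le, le_div_iff₀ h3]
  nlinarith

lemma lower (n : ℕ) (hn : 2 ≤ n) :
    1/(2*(n:ℝ) + 1/(1-Real.eulerMascheroniConstant) - 2) < dd n := by
  set c : ℝ := 1/(1-Real.eulerMascheroniConstant) - 2 with hc
  have hcb := hc_bound
  rw [← hc] at hcb
  have hstep : ∀ k, 2 ≤ k → (fun m : ℕ => 1/(2*(m:ℝ)+c) - dd m) k
      < (fun m : ℕ => 1/(2*(m:ℝ)+c) - dd m) (k+1) := by
    intro k hk
    have hx : (2:ℝ) ≤ (k:ℝ) := by exact_mod_cast hk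
    have h1 := keyB (k:ℝ) hx c hcb
    have h2 := dd_step k (by omega)
    simp only
    push_cast
    have e : 2*((k:ℝ)+1)+c = 2*(k:ℝ)+2+c := by ring
    rw [e]
    linarith
  have hlim : Tendsto (fun m : ℕ => 1/(2*(m:ℝ)+c) - dd m) atTop (𝓝 0) := by
    simpa using (aux_tendsto c).sub dd_tendsto
  have := neg_of_strict _ 2 hstep hlim n hn
  have e : 2*(n:ℝ) + 1/(1-Real.eulerMascheroniConstant) - 2 = 2*(n:ℝ) + c := by
    rw [hc]; ring
  rw [e]
  linarith

lemma dd_one : dd 1 = 1 - Real.eulerMascheroniConstant := by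
  unfold dd
  rw [show harmonic 1 = 1 by norm_num [harmonic, Finset.sum_range_succ]]
  push_cast
  simp [Real.log_one]

lemma eq_one : 1/(2*(1:ℝ) + 1/(1-Real.eulerMascheroniConstant) - 2)
    = 1 - Real.eulerMascheroniConstant := by
  have h2 := Real.eulerMascheroniConstant_lt_two_thirds
  have h3 : (0:ℝ) < 1 - Real.eulerMascheroniConstant := by linarith
  rw [show 2*(1:ℝ) + 1/(1-Real.eulerMascheroniConstant) - 2
      = 1/(1-Real.eulerMascheroniConstant) by ring, one_div_one_div]

theorem toth_mare_sharp (n : ℕ) (hn : 1 ≤ n) :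
    (1 / (2 * n + 1 / (1 - Real.eulerMascheroniConstant) - 2) ≤
        (harmonic n : ℝ) - Real.log n - Real.eulerMascheroniConstant ∧
      (harmonic n : ℝ) - Real.log n - Real.eulerMascheroniConstant <
        1 / (2 * n + 1 / 3)) ∧
    (1 / (2 * n + 1 / (1 - Real.eulerMascheroniConstant) - 2) =
        (harmonic n : ℝ) - Real.log n - Real.eulerMascheroniConstant ↔ n = 1) := by
  have hup := upper n hn
  unfold dd at hup
  obtain rfl | h2 : n = 1 ∨ 2 ≤ n := by omega
  · have e1 : 1 / (2 * ((1:ℕ):ℝ) + 1 / (1 - Real.eulerMascheroniConstant) - 2)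
        = (harmonic 1 : ℝ) - Real.log (1:ℕ) - Real.eulerMascheroniConstant := by
      have := eq_one
      have := dd_one
      unfold dd at this
      push_cast at *
      linarith
    refine ⟨⟨le_of_eq e1, by push_cast at hup ⊢; linarith⟩, ⟨fun _ => rfl, fun _ => e1⟩⟩
  · have hlo := lower n h2
    unfold dd at hlo
    refine ⟨⟨le_of_lt hlo, hup⟩, ⟨fun h => absurd h (ne_of_lt hlo), fun h => by omega⟩⟩
end

section
/- For every natural number n ≥ 1, define d_n by H_n = ln(n + 1/2) + γ + 1/(24(n + 1/2)^2 + d_n). Then the sequence {d_n} is strictly monotonically increasing. -/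
open Real Filter Topology

noncomputable def Ub (x : ℝ) : ℝ := (1680*x^4 - 294*x^2 + 155)/(40320*x^6)
noncomputable def Lb (x : ℝ) : ℝ := (1680*x^4 - 294*x^2 - 155)/(40320*x^6)
noncomputable def eSeq (n : ℕ) : ℝ :=
  (harmonic n : ℝ) - Real.log (n + 1/2) - Real.eulerMascheroniConstant

set_option maxHeartbeats 1000000

lemma C1 (y : ℝ) (hy : 2 ≤ y) :
    (560*y^6 + 84*y^4 + 15*y^2 + 35)/(6720*y^9) ≤ Ub (y-1/2) - Ub (y+1/2) := by
  have h1 : (0:ℝ) < y - 1/2 := by linarith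
  have h2 : (0:ℝ) < y + 1/2 := by linarith
  have h3 : (0:ℝ) < y := by linarith
  have hN : (0:ℝ) ≤ (-11025) + 259875*y^2 + (-2559060)*y^4
      + 13436640*y^6 + (-38404800)*y^8 + 52496640*y^10 + 245360640*y^12 := by
    obtain ⟨s, hs, rfl⟩ : ∃ s, 0 ≤ s ∧ y = 2 + s := ⟨y - 2, by linarith, by ring⟩
    nlinarith [pow_nonneg hs 2, pow_nonneg hs 3, pow_nonneg hs 4, pow_nonneg hs 5,
      pow_nonneg hs 6, pow_nonneg hs 7, pow_nonneg hs 8, pow_nonneg hs 9, pow_nonneg hs 10,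
      pow_nonneg hs 11, pow_nonneg hs 12]
  simp only [Ub]
  rw [div_sub_div _ _ (by positivity) (by positivity),
    div_le_div_iff₀ (by positivity) (by positivity), ← sub_nonneg]
  nlinarith [hN]

lemma C2 (y : ℝ) (hy : 2 ≤ y) :
    Lb (y-1/2) - Lb (y+1/2) ≤ (560*y^6 + 84*y^4 + 15*y^2 - 35)/(6720*y^9) := by
  have h1 : (0:ℝ) < y - 1/2 := by linarith
  have h2 : (0:ℝ) < y + 1/2 := by linarith
  have h3 : (0:ℝ) < y := by linarith
  have hN : (0:ℝ) ≤ (-11025) + 269325*y^2 + (-2732940)*y^4 + 14787360*y^6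
      + (-46267200)*y^8 + 107976960*y^10 + (-2365440)*y^12 + 399974400*y^14 := by
    obtain ⟨s, hs, rfl⟩ : ∃ s, 0 ≤ s ∧ y = 2 + s := ⟨y - 2, by linarith, by ring⟩
    nlinarith [pow_nonneg hs 2, pow_nonneg hs 3, pow_nonneg hs 4, pow_nonneg hs 5,
      pow_nonneg hs 6, pow_nonneg hs 7, pow_nonneg hs 8, pow_nonneg hs 9, pow_nonneg hs 10,
      pow_nonneg hs 11, pow_nonneg hs 12, pow_nonneg hs 13, pow_nonneg hs 14]
  simp only [Lb]
  rw [div_sub_div _ _ (by positivity) (by positivity),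
    div_le_div_iff₀ (by positivity) (by positivity), ← sub_nonneg]
  nlinarith [hN]

lemma C3 (y : ℝ) (hy : 3 ≤ y) :
    48*y*(Ub (y-1/2) * Ub (y+1/2)) < (560*y^6 + 84*y^4 + 15*y^2 - 35)/(6720*y^9) := by
  have h1 : (0:ℝ) < y - 1/2 := by linarith
  have h2 : (0:ℝ) < y + 1/2 := by linarith
  have h3 : (0:ℝ) < y := by linarith
  have hN : (0:ℝ) < (-13891500) + 339349500*y^2 + (-3443504400)*y^4 + 18632073600*y^6
      + (-58296672000)*y^8 + 107660125440*y^10 + (-421612369920)*y^12 + 56113827840*y^14 := by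
    obtain ⟨s, hs, rfl⟩ : ∃ s, 0 ≤ s ∧ y = 3 + s := ⟨y - 3, by linarith, by ring⟩
    nlinarith [pow_nonneg hs 2, pow_nonneg hs 3, pow_nonneg hs 4, pow_nonneg hs 5,
      pow_nonneg hs 6, pow_nonneg hs 7, pow_nonneg hs 8, pow_nonneg hs 9, pow_nonneg hs 10,
      pow_nonneg hs 11, pow_nonneg hs 12, pow_nonneg hs 13, pow_nonneg hs 14]
  simp only [Ub]
  rw [div_mul_div_comm, ← mul_div_assoc,
    div_lt_div_iff₀ (by positivity) (by positivity), ← sub_pos]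
  nlinarith [hN]

lemma Ub_pos (x : ℝ) (hx : 0 < x) : 0 < Ub x := by
  simp only [Ub]
  have : (0:ℝ) < 1680*x^4 - 294*x^2 + 155 := by nlinarith [sq_nonneg (x^2 - 7/80)]
  positivity

lemma Lb_pos (x : ℝ) (hx : 3/2 ≤ x) : 0 < Lb x := by
  simp only [Lb]
  have hx0 : (0:ℝ) < x := by linarith
  have : (0:ℝ) < 1680*x^4 - 294*x^2 - 155 := by nlinarith [sq_nonneg x, sq_nonneg (x - 3/2)]
  positivity

lemma log_expand (t : ℝ) (h0 : 0 < t) (h1 : t ≤ 1/4) :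
    |Real.log ((1+t)/(1-t)) - (2*t + 2*t^3/3 + 2*t^5/5 + 2*t^7/7)| ≤ 8/3*t^9 := by
  have ht1 : |t| < 1 := by rw [abs_of_pos h0]; linarith
  have ht1' : |(-t)| < 1 := by rw [abs_neg]; exact ht1
  have hA := Real.abs_log_sub_add_sum_range_le ht1 8
  have hB := Real.abs_log_sub_add_sum_range_le ht1' 8
  rw [abs_of_pos h0] at hA
  rw [abs_neg, abs_of_pos h0] at hB
  simp only [Finset.sum_range_succ, Finset.sum_range_zero] at hA hB
  norm_num at hA hB
  have hd : t^9/(1-t) ≤ 4/3*t^9 := by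
    rw [div_le_iff₀ (by linarith)]
    nlinarith [pow_pos h0 9]
  have hlog : Real.log ((1+t)/(1-t)) = Real.log (1+t) - Real.log (1-t) :=
    Real.log_div (by linarith) (by linarith)
  rw [hlog]
  have hA1 := abs_le.mp hA
  have hB1 := abs_le.mp hB
  rw [abs_le]
  constructor <;> nlinarith [hA1.1, hA1.2, hB1.1, hB1.2]

lemma Gub (y : ℝ) (hy : 2 ≤ y) :
    Real.log ((y+1/2)/(y-1/2)) - 1/y ≤ (560*y^6 + 84*y^4 + 15*y^2 + 35)/(6720*y^9) := by
  have h3 : (0:ℝ) < y := by linarith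
  have h0 : (0:ℝ) < 1/(2*y) := by positivity
  have h1 : 1/(2*y) ≤ 1/4 := by rw [div_le_div_iff₀ (by positivity) (by norm_num)]; linarith
  have key := log_expand (1/(2*y)) h0 h1
  have hlt : 1/(2*y) < 1 := by linarith
  have harg : (1+1/(2*y))/(1-1/(2*y)) = (y+1/2)/(y-1/2) := by
    rw [div_eq_div_iff (sub_pos.mpr hlt).ne' (by linarith : (0:ℝ) < y - 1/2).ne']
    field_simp
  rw [harg] at key
  have h2 := (abs_le.mp key).2
  have e1 : 2*(1/(2*y)) + 2*(1/(2*y))^3/3 + 2*(1/(2*y))^5/5 + 2*(1/(2*y))^7/7 + 8/3*(1/(2*y))^9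
      = 1/y + (560*y^6 + 84*y^4 + 15*y^2 + 35)/(6720*y^9) := by
    field_simp
    ring
  linarith [h2, e1]

lemma Glb (y : ℝ) (hy : 2 ≤ y) :
    (560*y^6 + 84*y^4 + 15*y^2 - 35)/(6720*y^9) ≤ Real.log ((y+1/2)/(y-1/2)) - 1/y := by
  have h3 : (0:ℝ) < y := by linarith
  have h0 : (0:ℝ) < 1/(2*y) := by positivity
  have h1 : 1/(2*y) ≤ 1/4 := by rw [div_le_div_iff₀ (by positivity) (by norm_num)]; linarith
  have key := log_expand (1/(2*y)) h0 h1
  have hlt : 1/(2*y) < 1 := by linarith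
  have harg : (1+1/(2*y))/(1-1/(2*y)) = (y+1/2)/(y-1/2) := by
    rw [div_eq_div_iff (sub_pos.mpr hlt).ne' (by linarith : (0:ℝ) < y - 1/2).ne']
    field_simp
  rw [harg] at key
  have h2 := (abs_le.mp key).1
  have e1 : 2*(1/(2*y)) + 2*(1/(2*y))^3/3 + 2*(1/(2*y))^5/5 + 2*(1/(2*y))^7/7 - 8/3*(1/(2*y))^9
      = 1/y + (560*y^6 + 84*y^4 + 15*y^2 - 35)/(6720*y^9) := by
    field_simp
    ring
  linarith [h2, e1]

lemma eSeq_sub (k : ℕ) :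
    eSeq k - eSeq (k+1)
      = Real.log ((((k:ℝ)+1)+1/2)/(((k:ℝ)+1)-1/2)) - 1/((k:ℝ)+1) := by
  have hk : (0:ℝ) ≤ (k:ℝ) := Nat.cast_nonneg k
  have hb : (0:ℝ) < ((k:ℝ)+1) - 1/2 := by linarith
  have ha : (0:ℝ) < ((k:ℝ)+1) + 1/2 := by linarith
  rw [Real.log_div ha.ne' hb.ne']
  simp only [eSeq]
  rw [harmonic_succ]
  have e1 : Real.log (((k:ℝ)+1) - 1/2) = Real.log ((k:ℝ) + 1/2) := by
    rw [show ((k:ℝ)+1) - 1/2 = (k:ℝ) + 1/2 by ring]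
  have e2 : Real.log (((k:ℝ)+1) + 1/2) = Real.log (((k+1:ℕ):ℝ) + 1/2) := by push_cast; ring_nf
  rw [e1, e2]
  push_cast
  ring

lemma tendsto_eSeq : Tendsto eSeq atTop (𝓝 0) := by
  have h1 : Tendsto (fun n : ℕ => (harmonic n : ℝ) - Real.log n
      - Real.eulerMascheroniConstant) atTop (𝓝 0) := by
    have := Real.tendsto_harmonic_sub_log.sub_const Real.eulerMascheroniConstant
    simpa using this
  have h2 : Tendsto (fun n : ℕ => Real.log ((n:ℝ) + 1/2) - Real.log n) atTop (𝓝 0) := by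
    have ha : Tendsto (fun n : ℕ => 1 + (1/2)/(n:ℝ)) atTop (𝓝 1) := by
      have := (tendsto_const_nhds (x := (1/2:ℝ))).div_atTop tendsto_natCast_atTop_atTop
      simpa using (tendsto_const_nhds (x := (1:ℝ))).add this
    have hb := ((Real.continuousAt_log (by norm_num : (1:ℝ) ≠ 0)).tendsto).comp ha
    rw [Real.log_one] at hb
    apply hb.congr'
    filter_upwards [eventually_ge_atTop 1] with n hn
    have hn0 : (0:ℝ) < (n:ℝ) := by exact_mod_cast Nat.pos_of_ne_zero (by omega)
    have he : 1 + (1/2)/(n:ℝ) = ((n:ℝ) + 1/2)/(n:ℝ) := by field_simp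
    simp only [Function.comp]
    rw [he, Real.log_div (by positivity) hn0.ne']
  have h3 := h1.sub h2
  simp only [sub_zero] at h3
  apply h3.congr
  intro n
  simp only [eSeq]
  ring

lemma tendsto_Ub : Tendsto (fun k : ℕ => Ub ((k:ℝ)+1/2)) atTop (𝓝 0) := by
  have hx : Tendsto (fun k : ℕ => ((k:ℝ)+1/2)) atTop atTop :=
    tendsto_atTop_add_const_right _ _ tendsto_natCast_atTop_atTop
  have hu : Tendsto (fun k : ℕ => ((k:ℝ)+1/2)⁻¹) atTop (𝓝 0) := tendsto_inv_atTop_zero.comp hx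
  have hg : Continuous (fun u : ℝ => 1680/40320*u^2 - 294/40320*u^4 + 155/40320*u^6) := by
    continuity
  have h0 := (hg.tendsto 0).comp hu
  norm_num at h0
  apply h0.congr
  intro k
  have hk : ((k:ℝ)+1/2) ≠ 0 := by positivity
  simp only [Function.comp, Ub]
  field_simp
  ring

lemma tendsto_Lb : Tendsto (fun k : ℕ => Lb ((k:ℝ)+1/2)) atTop (𝓝 0) := by
  have hx : Tendsto (fun k : ℕ => ((k:ℝ)+1/2)) atTop atTop :=
    tendsto_atTop_add_const_right _ _ tendsto_natCast_atTop_atTop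
  have hu : Tendsto (fun k : ℕ => ((k:ℝ)+1/2)⁻¹) atTop (𝓝 0) := tendsto_inv_atTop_zero.comp hx
  have hg : Continuous (fun u : ℝ => 1680/40320*u^2 - 294/40320*u^4 - 155/40320*u^6) := by
    continuity
  have h0 := (hg.tendsto 0).comp hu
  norm_num at h0
  apply h0.congr
  intro k
  have hk : ((k:ℝ)+1/2) ≠ 0 := by positivity
  simp only [Function.comp, Lb]
  field_simp
  ring

lemma eSeq_le_Ub (n : ℕ) (hn : 1 ≤ n) : eSeq n ≤ Ub ((n:ℝ)+1/2) := by
  have mono : ∀ k : ℕ, 1 ≤ k →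
      eSeq k - Ub ((k:ℝ)+1/2) ≤ eSeq (k+1) - Ub (((k+1:ℕ):ℝ)+1/2) := by
    intro k hk
    have hk1 : (1:ℝ) ≤ (k:ℝ) := by exact_mod_cast hk
    have hy : (2:ℝ) ≤ (k:ℝ)+1 := by linarith
    have hG := Gub ((k:ℝ)+1) hy
    have hC := C1 ((k:ℝ)+1) hy
    have e1 : ((k:ℝ)+1) - 1/2 = (k:ℝ)+1/2 := by ring
    have e2 : ((k:ℝ)+1) + 1/2 = ((k+1:ℕ):ℝ)+1/2 := by push_cast; ring
    rw [e1, e2] at hC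
    have hdiff := eSeq_sub k
    linarith
  have chain : ∀ m, n ≤ m → eSeq n - Ub ((n:ℝ)+1/2) ≤ eSeq m - Ub ((m:ℝ)+1/2) := by
    intro m hm
    induction m, hm using Nat.le_induction with
    | base => exact le_refl _
    | succ m hm ih => exact ih.trans (mono m (hn.trans hm))
  have htend : Tendsto (fun m : ℕ => eSeq m - Ub ((m:ℝ)+1/2)) atTop (𝓝 0) := by
    simpa using tendsto_eSeq.sub tendsto_Ub
  have := ge_of_tendsto htend (eventually_atTop.mpr ⟨n, chain⟩)
  linarith

lemma Lb_le_eSeq (n : ℕ) (hn : 1 ≤ n) : Lb ((n:ℝ)+1/2) ≤ eSeq n := by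
  have mono : ∀ k : ℕ, 1 ≤ k →
      eSeq (k+1) - Lb (((k+1:ℕ):ℝ)+1/2) ≤ eSeq k - Lb ((k:ℝ)+1/2) := by
    intro k hk
    have hk1 : (1:ℝ) ≤ (k:ℝ) := by exact_mod_cast hk
    have hy : (2:ℝ) ≤ (k:ℝ)+1 := by linarith
    have hG := Glb ((k:ℝ)+1) hy
    have hC := C2 ((k:ℝ)+1) hy
    have e1 : ((k:ℝ)+1) - 1/2 = (k:ℝ)+1/2 := by ring
    have e2 : ((k:ℝ)+1) + 1/2 = ((k+1:ℕ):ℝ)+1/2 := by push_cast; ring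
    rw [e1, e2] at hC
    have hdiff := eSeq_sub k
    linarith
  have chain : ∀ m, n ≤ m → eSeq m - Lb ((m:ℝ)+1/2) ≤ eSeq n - Lb ((n:ℝ)+1/2) := by
    intro m hm
    induction m, hm using Nat.le_induction with
    | base => exact le_refl _
    | succ m hm ih => exact (mono m (hn.trans hm)).trans ih
  have htend : Tendsto (fun m : ℕ => eSeq m - Lb ((m:ℝ)+1/2)) atTop (𝓝 0) := by
    simpa using tendsto_eSeq.sub tendsto_Lb
  have := le_of_tendsto htend (eventually_atTop.mpr ⟨n, chain⟩)
  linarith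

lemma eSeq_pos (n : ℕ) (hn : 1 ≤ n) : 0 < eSeq n := by
  have hk1 : (1:ℝ) ≤ (n:ℝ) := by exact_mod_cast hn
  have h := Lb_le_eSeq n hn
  have hL := Lb_pos ((n:ℝ)+1/2) (by linarith)
  linarith

lemma main_step (n : ℕ) (hn : 2 ≤ n) :
    1/(eSeq n) - 24*((n:ℝ)+1/2)^2 < 1/(eSeq (n+1)) - 24*(((n+1:ℕ):ℝ)+1/2)^2 := by
  have hk1 : (2:ℝ) ≤ (n:ℝ) := by exact_mod_cast hn
  have hy : (3:ℝ) ≤ (n:ℝ)+1 := by linarith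
  have hy2 : (2:ℝ) ≤ (n:ℝ)+1 := by linarith
  have he := eSeq_pos n (by omega)
  have he' := eSeq_pos (n+1) (by omega)
  have heU := eSeq_le_Ub n (by omega)
  have he'U := eSeq_le_Ub (n+1) (by omega)
  have hG := Glb ((n:ℝ)+1) hy2
  have hC := C3 ((n:ℝ)+1) hy
  have e1 : ((n:ℝ)+1) - 1/2 = (n:ℝ)+1/2 := by ring
  have e2 : ((n:ℝ)+1) + 1/2 = ((n+1:ℕ):ℝ)+1/2 := by push_cast; ring
  rw [e1, e2] at hC
  have hdiff := eSeq_sub n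
  have hUpos : 0 < Ub ((n:ℝ)+1/2) := Ub_pos _ (by linarith)
  have hU'pos : 0 < Ub (((n+1:ℕ):ℝ)+1/2) := by
    apply Ub_pos; push_cast; linarith
  have hmul : eSeq n * eSeq (n+1) ≤ Ub ((n:ℝ)+1/2) * Ub (((n+1:ℕ):ℝ)+1/2) :=
    mul_le_mul heU he'U he'.le hUpos.le
  have h48 : 48*((n:ℝ)+1)*(eSeq n * eSeq (n+1))
      ≤ 48*((n:ℝ)+1)*(Ub ((n:ℝ)+1/2) * Ub (((n+1:ℕ):ℝ)+1/2)) :=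
    mul_le_mul_of_nonneg_left hmul (by positivity)
  have key : 48*((n:ℝ)+1)*(eSeq n * eSeq (n+1)) < eSeq n - eSeq (n+1) := by
    calc 48*((n:ℝ)+1)*(eSeq n * eSeq (n+1))
        ≤ 48*((n:ℝ)+1)*(Ub ((n:ℝ)+1/2) * Ub (((n+1:ℕ):ℝ)+1/2)) := h48
      _ < (560*((n:ℝ)+1)^6 + 84*((n:ℝ)+1)^4 + 15*((n:ℝ)+1)^2 - 35)/(6720*((n:ℝ)+1)^9) := hC
      _ ≤ Real.log ((((n:ℝ)+1)+1/2)/(((n:ℝ)+1)-1/2)) - 1/((n:ℝ)+1) := hG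
      _ = eSeq n - eSeq (n+1) := hdiff.symm
  have hee : 0 < eSeq n * eSeq (n+1) := mul_pos he he'
  have hfrac : 48*((n:ℝ)+1) < (eSeq n - eSeq (n+1))/(eSeq n * eSeq (n+1)) := by
    rw [lt_div_iff₀ hee]
    linarith
  have hsplit : (eSeq n - eSeq (n+1))/(eSeq n * eSeq (n+1))
      = 1/(eSeq (n+1)) - 1/(eSeq n) := by
    field_simp
  have hcast : 24*(((n+1:ℕ):ℝ)+1/2)^2 - 24*((n:ℝ)+1/2)^2 = 48*((n:ℝ)+1) := by
    push_cast; ring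
  rw [hsplit] at hfrac
  linarith

lemma base_step :
    1/(eSeq 1) - 24*(((1:ℕ):ℝ)+1/2)^2 < 1/(eSeq 2) - 24*(((2:ℕ):ℝ)+1/2)^2 := by
  have he2 := eSeq_pos 2 (by norm_num)
  have he1 := eSeq_pos 1 (by norm_num)
  have he2U : eSeq 2 ≤ 25577/3937500 := by
    have h := eSeq_le_Ub 2 (by norm_num)
    have hU : Ub (((2:ℕ):ℝ)+1/2) = 25577/3937500 := by
      simp only [Ub]; norm_num
    rw [hU] at h
    exact h
  have hdiff := eSeq_sub 1
  have hG := Glb 2 le_rfl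
  norm_num at hdiff hG
  have hgl : (12403:ℝ)/1146880 ≤ eSeq 1 - eSeq 2 := by
    rw [hdiff]
    linarith
  have hkey : 96*(eSeq 2 * eSeq 1) < eSeq 1 - eSeq 2 := by
    have h1 : (0:ℝ) ≤ eSeq 1 - eSeq 2 - 12403/1146880 := by linarith
    have h2 : (0:ℝ) ≤ 25577/3937500 - eSeq 2 := by linarith
    nlinarith [mul_nonneg h1 h2, mul_nonneg h1 he2.le, mul_nonneg h2 he2.le,
      mul_nonneg h2 h2, mul_nonneg h1 he1.le, mul_nonneg h2 he1.le]
  have hee : 0 < eSeq 2 * eSeq 1 := mul_pos he2 he1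
  have hfrac : (96:ℝ) < (eSeq 1 - eSeq 2)/(eSeq 2 * eSeq 1) := by
    rw [lt_div_iff₀ hee]
    linarith
  have hsplit : (eSeq 1 - eSeq 2)/(eSeq 2 * eSeq 1) = 1/(eSeq 2) - 1/(eSeq 1) := by
    field_simp
  rw [hsplit] at hfrac
  rw [show 24*(((1:ℕ):ℝ)+1/2)^2 = 54 by norm_num, show 24*(((2:ℕ):ℝ)+1/2)^2 = 150 by norm_num]
  linarith

theorem d_strictMono :
    StrictMonoOn
      (fun n : ℕ =>
        1 / ((harmonic n : ℝ) - Real.log (n + 1 / 2) - Real.eulerMascheroniConstant) -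
          24 * (n + 1 / 2 : ℝ) ^ 2)
      (Set.Ici 1) := by
  have step : ∀ n : ℕ, 1 ≤ n →
      1/(eSeq n) - 24*((n:ℝ)+1/2)^2 < 1/(eSeq (n+1)) - 24*(((n+1:ℕ):ℝ)+1/2)^2 := by
    intro n hn
    rcases eq_or_lt_of_le hn with h | h
    · subst h
      have := base_step
      norm_num at this ⊢
      convert this using 2 <;> norm_num
    · exact main_step n h
  intro a ha b hb hab
  simp only [Set.mem_Ici] at ha hb
  simp only []
  have key : ∀ c : ℕ, a + 1 ≤ c →
      1/(eSeq a) - 24*((a:ℝ)+1/2)^2 < 1/(eSeq c) - 24*((c:ℝ)+1/2)^2 := by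
    intro c hc
    induction c, hc using Nat.le_induction with
    | base =>
      have := step a ha
      push_cast at this ⊢
      convert this using 3 <;> push_cast <;> ring
    | succ m hm ih =>
      have hstep := step m (by omega)
      push_cast at hstep
      refine ih.trans (by push_cast; convert hstep using 3 <;> push_cast <;> ring)
  have := key b hab
  simp only [eSeq] at this
  exact this
end

section
/- For every natural number n ≥ 1, let d_n := 1/(H_n − ln(n + 1/2) − γ) − 24(n + 1/2)^2. Then d_n converges to 21/5 as n → ∞. -/
set_option maxHeartbeats 1000000

open Real Filter

section Aux
open Finset Topology

noncomputable def epsn (n : ℕ) : ℝ :=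
  (harmonic n : ℝ) - Real.log (n + 1/2) - Real.eulerMascheroniConstant

noncomputable def Gf (c : ℝ) (n : ℕ) : ℝ :=
  1/(24*((n:ℝ)+1/2)^2) - 7/(960*((n:ℝ)+1/2)^4) + c/((n:ℝ)+1/2)^5

lemma rat_eq (c u : ℝ) (h2 : (0:ℝ) < u - 1/2) (h3 : (0:ℝ) < u + 1/2) :
    (1/(24*(u-1/2)^2) - 7/(960*(u-1/2)^4) + c/(u-1/2)^5)
        - (1/(24*(u+1/2)^2) - 7/(960*(u+1/2)^4) + c/(u+1/2)^5)
      = (80*u^7 - 88*u^5 + 4800*c*u^4 + 15*u^3 + 2400*c*u^2 + (1/2)*u + 60*c)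
          /(960*(u-1/2)^5*(u+1/2)^5) := by
  have e1 : 1/(24*(u-1/2)^2)
      = (40*(u-1/2)^3*(u+1/2)^5)/(960*(u-1/2)^5*(u+1/2)^5) := by
    rw [div_eq_div_iff (by positivity) (by positivity)]; ring
  have e2 : 7/(960*(u-1/2)^4)
      = (7*(u-1/2)*(u+1/2)^5)/(960*(u-1/2)^5*(u+1/2)^5) := by
    rw [div_eq_div_iff (by positivity) (by positivity)]; ring
  have e3 : c/(u-1/2)^5
      = (960*c*(u+1/2)^5)/(960*(u-1/2)^5*(u+1/2)^5) := by
    rw [div_eq_div_iff (by positivity) (by positivity)]; ring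
  have e4 : 1/(24*(u+1/2)^2)
      = (40*(u+1/2)^3*(u-1/2)^5)/(960*(u-1/2)^5*(u+1/2)^5) := by
    rw [div_eq_div_iff (by positivity) (by positivity)]; ring
  have e5 : 7/(960*(u+1/2)^4)
      = (7*(u+1/2)*(u-1/2)^5)/(960*(u-1/2)^5*(u+1/2)^5) := by
    rw [div_eq_div_iff (by positivity) (by positivity)]; ring
  have e6 : c/(u+1/2)^5
      = (960*c*(u-1/2)^5)/(960*(u-1/2)^5*(u+1/2)^5) := by
    rw [div_eq_div_iff (by positivity) (by positivity)]; ring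
  rw [e1, e2, e3, e4, e5, e6, div_sub_div_same, ← add_div, div_sub_div_same,
    ← add_div, div_sub_div_same]
  congr 1
  ring

lemma lhs_eq (u : ℝ) (h1 : (0:ℝ) < u) (s : ℝ) :
    1/(12*u^3) + 1/(80*u^5) + s/(32*u^7)
      = (80*u^4 + 12*u^2 + 30*s)/(960*u^7) := by
  have e1 : 1/(12*u^3) = (80*u^4)/(960*u^7) := by
    rw [div_eq_div_iff (by positivity) (by positivity)]; ring
  have e2 : 1/(80*u^5) = (12*u^2)/(960*u^7) := by
    rw [div_eq_div_iff (by positivity) (by positivity)]; ring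
  have e3 : s/(32*u^7) = (30*s)/(960*u^7) := by
    rw [div_eq_div_iff (by positivity) (by positivity)]; ring
  rw [e1, e2, e3, ← add_div, ← add_div]

lemma ratU (u : ℝ) (hu : 1 ≤ u) :
    1/(12*u^3) + 1/(80*u^5) + 1/(32*u^7) ≤
      (1/(24*(u-1/2)^2) - 7/(960*(u-1/2)^4) + 1/(u-1/2)^5)
        - (1/(24*(u+1/2)^2) - 7/(960*(u+1/2)^4) + 1/(u+1/2)^5) := by
  have h1 : (0:ℝ) < u := by linarith
  have h2 : (0:ℝ) < u - 1/2 := by linarith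
  have h3 : (0:ℝ) < u + 1/2 := by linarith
  have hv : (0:ℝ) ≤ u - 1 := by linarith
  rw [lhs_eq u h1 1, rat_eq 1 u h2 h3, div_le_div_iff₀ (by positivity) (by positivity)]
  have p1 := pow_nonneg hv 1
  have p2 := pow_nonneg hv 2
  have p3 := pow_nonneg hv 3
  have p4 := pow_nonneg hv 4
  have p5 := pow_nonneg hv 5
  have p6 := pow_nonneg hv 6
  have p7 := pow_nonneg hv 7
  have p8 := pow_nonneg hv 8
  have p9 := pow_nonneg hv 9
  have p10 := pow_nonneg hv 10
  have p11 := pow_nonneg hv 11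
  nlinarith [p1, p2, p3, p4, p5, p6, p7, p8, p9, p10, p11]

lemma ratL (u : ℝ) (hu : 1 ≤ u) :
    (1/(24*(u-1/2)^2) - 7/(960*(u-1/2)^4) + (-1)/(u-1/2)^5)
        - (1/(24*(u+1/2)^2) - 7/(960*(u+1/2)^4) + (-1)/(u+1/2)^5)
      ≤ 1/(12*u^3) + 1/(80*u^5) + (-1)/(32*u^7) := by
  have h1 : (0:ℝ) < u := by linarith
  have h2 : (0:ℝ) < u - 1/2 := by linarith
  have h3 : (0:ℝ) < u + 1/2 := by linarith
  have hv : (0:ℝ) ≤ u - 1 := by linarith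
  rw [lhs_eq u h1 (-1), rat_eq (-1) u h2 h3,
    div_le_div_iff₀ (by positivity) (by positivity)]
  have p1 := pow_nonneg hv 1
  have p2 := pow_nonneg hv 2
  have p3 := pow_nonneg hv 3
  have p4 := pow_nonneg hv 4
  have p5 := pow_nonneg hv 5
  have p6 := pow_nonneg hv 6
  have p7 := pow_nonneg hv 7
  have p8 := pow_nonneg hv 8
  have p9 := pow_nonneg hv 9
  have p10 := pow_nonneg hv 10
  have p11 := pow_nonneg hv 11
  nlinarith [p1, p2, p3, p4, p5, p6, p7, p8, p9, p10, p11]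
lemma log_bound (u : ℝ) (hu : 1 ≤ u) :
    |Real.log (u+1/2) - Real.log (u-1/2) - (1/u + 1/(12*u^3) + 1/(80*u^5))|
      ≤ 1/(32*u^7) := by
  have h1 : (0:ℝ) < u := by linarith
  set x : ℝ := 1/(2*u) with hxdef
  have hx0 : 0 < x := by positivity
  have hx2 : x ≤ 1/2 := by
    rw [hxdef, div_le_div_iff₀ (by positivity) (by norm_num)]
    linarith
  have hxabs : |x| < 1 := by rw [abs_of_pos hx0]; linarith
  have hxabs' : |(-x)| < 1 := by rw [abs_neg]; exact hxabs
  have A := Real.abs_log_sub_add_sum_range_le hxabs 6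
  have B := Real.abs_log_sub_add_sum_range_le hxabs' 6
  rw [abs_of_pos hx0] at A
  rw [abs_neg, abs_of_pos hx0] at B
  have hux : u * x = 1/2 := by
    rw [hxdef]; field_simp
  have hlp : Real.log (u + 1/2) = Real.log u + Real.log (1 - (-x)) := by
    rw [← Real.log_mul h1.ne' (by nlinarith : (1 - (-x) : ℝ) ≠ 0)]
    congr 1
    nlinarith
  have hlm : Real.log (u - 1/2) = Real.log u + Real.log (1 - x) := by
    rw [← Real.log_mul h1.ne' (by nlinarith : (1 - x : ℝ) ≠ 0)]
    congr 1
    nlinarith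
  rw [hlp, hlm]
  have key : Real.log u + Real.log (1 - -x) - (Real.log u + Real.log (1-x))
      - (1/u + 1/(12*u^3) + 1/(80*u^5))
      = ((∑ i ∈ Finset.range 6, (-x) ^ (i + 1) / (i + 1)) + Real.log (1 - -x))
        - ((∑ i ∈ Finset.range 6, x ^ (i + 1) / (i + 1)) + Real.log (1 - x))
        + ((2*x + 2*x^3/3 + 2*x^5/5) - (1/u + 1/(12*u^3) + 1/(80*u^5))) := by
    simp only [Finset.sum_range_succ, Finset.sum_range_zero]
    push_cast
    ring
  have hsum : (2*x + 2*x^3/3 + 2*x^5/5) = 1/u + 1/(12*u^3) + 1/(80*u^5) := by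
    rw [hxdef]
    field_simp
    ring
  rw [key, hsum, sub_self, add_zero]
  have tri : |((∑ i ∈ Finset.range 6, (-x) ^ (i + 1) / (i + 1)) + Real.log (1 - -x))
        - ((∑ i ∈ Finset.range 6, x ^ (i + 1) / (i + 1)) + Real.log (1 - x))|
      ≤ x ^ 7 / (1 - x) + x ^ 7 / (1 - x) := by
    calc _ ≤ _ := abs_sub _ _
    _ ≤ x ^ 7 / (1 - x) + x ^ 7 / (1 - x) := by
        apply add_le_add
        · simpa using B
        · simpa using A
  refine tri.trans ?_
  have hx7 : x ^ 7 = 1/(128*u^7) := by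
    rw [hxdef]; field_simp; ring
  have h1mx : (1:ℝ)/2 ≤ 1 - x := by linarith
  have hb : x ^ 7 / (1 - x) ≤ x ^ 7 / (1/2) :=
    div_le_div_of_nonneg_left (by positivity) (by norm_num) h1mx
  have h2' : x ^ 7 / (1/2) = 2 * x ^ 7 := by ring
  have hfin : x ^ 7 / (1 - x) + x ^ 7 / (1 - x) ≤ 4 * x ^ 7 := by
    rw [h2'] at hb; linarith
  refine hfin.trans ?_
  rw [hx7, mul_one_div, div_le_div_iff₀ (by positivity) (by positivity)]
  nlinarith [pow_pos h1 7]
lemma epsn_diff (n : ℕ) :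
    epsn n - epsn (n+1) =
      Real.log (((n:ℝ)+1) + 1/2) - Real.log (((n:ℝ)+1) - 1/2) - 1/((n:ℝ)+1) := by
  unfold epsn
  have h : (harmonic (n+1) : ℝ) = (harmonic n : ℝ) + 1/((n:ℝ)+1) := by
    push_cast [harmonic_succ]
    ring
  have harg : ((n:ℝ)+1) - 1/2 = (n:ℝ) + 1/2 := by ring
  rw [h, harg]
  push_cast
  ring

lemma Gf_diff (c : ℝ) (n : ℕ) :
    Gf c n - Gf c (n+1) =
      (1/(24*(((n:ℝ)+1)-1/2)^2) - 7/(960*(((n:ℝ)+1)-1/2)^4) + c/(((n:ℝ)+1)-1/2)^5)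
        - (1/(24*(((n:ℝ)+1)+1/2)^2) - 7/(960*(((n:ℝ)+1)+1/2)^4) + c/(((n:ℝ)+1)+1/2)^5) := by
  unfold Gf
  have e1 : ((n:ℝ)+1) - 1/2 = (n:ℝ) + 1/2 := by ring
  have e2 : ((n:ℝ)+1) + 1/2 = ((n+1:ℕ):ℝ) + 1/2 := by push_cast; ring
  rw [e1, e2]

lemma diff_le (n : ℕ) : epsn n - epsn (n+1) ≤ Gf 1 n - Gf 1 (n+1) := by
  have hu : (1:ℝ) ≤ (n:ℝ)+1 := by
    have : (0:ℝ) ≤ n := Nat.cast_nonneg n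
    linarith
  have h1 := (abs_le.mp (log_bound ((n:ℝ)+1) hu)).2
  rw [epsn_diff, Gf_diff]
  have h2 := ratU ((n:ℝ)+1) hu
  linarith

lemma le_diff (n : ℕ) : Gf (-1) n - Gf (-1) (n+1) ≤ epsn n - epsn (n+1) := by
  have hu : (1:ℝ) ≤ (n:ℝ)+1 := by
    have : (0:ℝ) ≤ n := Nat.cast_nonneg n
    linarith
  have h1 := (abs_le.mp (log_bound ((n:ℝ)+1) hu)).1
  rw [epsn_diff, Gf_diff]
  have h2 := ratL ((n:ℝ)+1) hu
  have hneg : 1/(12*((n:ℝ)+1)^3) + 1/(80*((n:ℝ)+1)^5) + (-1)/(32*((n:ℝ)+1)^7)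
      = 1/(12*((n:ℝ)+1)^3) + 1/(80*((n:ℝ)+1)^5) - 1/(32*((n:ℝ)+1)^7) := by ring
  rw [hneg] at h2
  linarith

lemma hN_tendsto : Tendsto (fun n : ℕ => (n:ℝ) + 1/2) atTop atTop :=
  tendsto_atTop_add_const_right _ _ tendsto_natCast_atTop_atTop

lemma ht_tendsto : Tendsto (fun n : ℕ => 1/((n:ℝ) + 1/2)) atTop (𝓝 0) := by
  simpa [one_div, Pi.inv_def] using hN_tendsto.inv_tendsto_atTop

lemma Gf_tendsto (c : ℝ) : Tendsto (Gf c) atTop (𝓝 0) := by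
  have h := ht_tendsto
  have heq : Gf c = fun n : ℕ =>
      1/24*(1/((n:ℝ)+1/2))^2 - 7/960*(1/((n:ℝ)+1/2))^4 + c*(1/((n:ℝ)+1/2))^5 := by
    funext n
    have h0 : ((n:ℝ)+1/2) ≠ 0 := by positivity
    unfold Gf
    field_simp
  rw [heq]
  have h2 := (((h.pow 2).const_mul (1/24:ℝ)).sub ((h.pow 4).const_mul (7/960:ℝ))).add
    ((h.pow 5).const_mul c)
  simpa using h2

lemma epsn_tendsto : Tendsto epsn atTop (𝓝 0) := by
  have h1 := Real.tendsto_harmonic_sub_log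
  have ha : Tendsto (fun n : ℕ => ((n:ℝ)+1/2)/n) atTop (𝓝 1) := by
    have hb : Tendsto (fun n : ℕ => 1 + (1/2)*(1/(n:ℝ))) atTop (𝓝 1) := by
      have := tendsto_one_div_atTop_nhds_zero_nat.const_mul (1/2:ℝ)
      simpa using this.const_add 1
    apply hb.congr'
    filter_upwards [eventually_ge_atTop 1] with n hn
    have hn0 : ((n:ℝ)) ≠ 0 := by positivity
    field_simp
  have hlog : Tendsto (fun n : ℕ => Real.log (((n:ℝ)+1/2)/n)) atTop (𝓝 0) := by
    have := (Real.continuousAt_log one_ne_zero).tendsto.comp ha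
    simpa [Real.log_one, Function.comp_def] using this
  have h2 : Tendsto (fun n : ℕ => Real.log ((n:ℝ) + 1/2) - Real.log n) atTop (𝓝 0) := by
    apply hlog.congr'
    filter_upwards [eventually_ge_atTop 1] with n hn
    have hn0 : ((n:ℝ)) ≠ 0 := by positivity
    rw [Real.log_div (by positivity) hn0]
  have h3 := (h1.sub_const Real.eulerMascheroniConstant).sub h2
  rw [sub_self, sub_zero] at h3
  apply h3.congr
  intro n
  unfold epsn
  ring

lemma epsn_le (n : ℕ) : epsn n ≤ Gf 1 n := by
  have mono : Monotone (fun k => epsn k - Gf 1 k) :=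
    monotone_nat_of_le_succ (fun k => by have := diff_le k; linarith)
  have hlim : Tendsto (fun k => epsn k - Gf 1 k) atTop (𝓝 0) := by
    simpa using epsn_tendsto.sub (Gf_tendsto 1)
  have h := ge_of_tendsto hlim (eventually_atTop.mpr ⟨n, fun k hk => mono hk⟩)
  have h' : epsn n - Gf 1 n ≤ 0 := h
  linarith

lemma le_epsn (n : ℕ) : Gf (-1) n ≤ epsn n := by
  have anti : Antitone (fun k => epsn k - Gf (-1) k) :=
    antitone_nat_of_succ_le (fun k => by have := le_diff k; linarith)
  have hlim : Tendsto (fun k => epsn k - Gf (-1) k) atTop (𝓝 0) := by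
    simpa using epsn_tendsto.sub (Gf_tendsto (-1))
  have h := le_of_tendsto hlim (eventually_atTop.mpr ⟨n, fun k hk => anti hk⟩)
  have h' : 0 ≤ epsn n - Gf (-1) n := h
  linarith

lemma Gf_pos_aux (c N : ℝ) (hc : -1 ≤ c) (hN : 9/2 ≤ N) :
    0 < 1/(24*N^2) - 7/(960*N^4) + c/N^5 := by
  have hNpos : (0:ℝ) < N := lt_of_lt_of_le (by norm_num) hN
  have e1 : 1/(24*N^2) = (40*N^3)/(960*N^5) := by
    rw [div_eq_div_iff (by positivity) (by positivity)]; ring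
  have e2 : 7/(960*N^4) = (7*N)/(960*N^5) := by
    rw [div_eq_div_iff (by positivity) (by positivity)]; ring
  have e3 : c/N^5 = (960*c)/(960*N^5) := by
    rw [div_eq_div_iff (by positivity) (by positivity)]; ring
  rw [e1, e2, e3, div_sub_div_same, ← add_div]
  apply div_pos _ (by positivity)
  nlinarith [hN, hc,
    mul_le_mul_of_nonneg_right (mul_le_mul hN hN (by norm_num) hNpos.le) hNpos.le]

lemma Gf_pos (c : ℝ) (hc : -1 ≤ c) (n : ℕ) (hn : 4 ≤ n) : 0 < Gf c n := by
  have hN : (9/2:ℝ) ≤ (n:ℝ)+1/2 := by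
    have : (4:ℝ) ≤ n := by exact_mod_cast hn
    linarith
  exact Gf_pos_aux c ((n:ℝ)+1/2) hc hN

lemma alg1 (c N G : ℝ) (hN : 0 < N)
    (hG : G = 1/(24*N^2) - 7/(960*N^4) + c/N^5) (hGpos : 0 < G) :
    1/G - 24*N^2 = (7/40 - 24*c*(1/N)) / (1/24 - 7/960*(1/N)^2 + c*(1/N)^3) := by
  have hD : 1/24 - 7/960*(1/N)^2 + c*(1/N)^3 = G * N^2 := by
    rw [hG]; field_simp
  have h1 : (1/G - 24*N^2)*(G*N^2) = N^2 - 24*N^4*G := by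
    field_simp
  rw [hD, eq_div_iff (by positivity), h1, hG]
  field_simp
  ring

lemma invG_tendsto (c : ℝ) (hc : -1 ≤ c) :
    Tendsto (fun n : ℕ => 1/(Gf c n) - 24*((n:ℝ)+1/2)^2) atTop (𝓝 (21/5)) := by
  have ht := ht_tendsto
  have hnum : Tendsto (fun n : ℕ => 7/40 - 24*c*(1/((n:ℝ)+1/2))) atTop (𝓝 (7/40)) := by
    have h2 := (ht.const_mul (24*c)).const_sub (7/40:ℝ)
    simpa using h2
  have hden : Tendsto (fun n : ℕ =>
      1/24 - 7/960*(1/((n:ℝ)+1/2))^2 + c*(1/((n:ℝ)+1/2))^3) atTop (𝓝 (1/24)) := by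
    have h2 := (((ht.pow 2).const_mul (7/960:ℝ)).const_sub (1/24:ℝ)).add
      ((ht.pow 3).const_mul c)
    simpa using h2
  have hmain := hnum.div hden (by norm_num)
  have hval : ((7:ℝ)/40) / (1/24) = 21/5 := by norm_num
  rw [hval] at hmain
  apply hmain.congr'
  filter_upwards [eventually_ge_atTop 4] with n hn
  have hNpos : (0:ℝ) < (n:ℝ)+1/2 := by positivity
  exact (alg1 c ((n:ℝ)+1/2) (Gf c n) hNpos rfl (Gf_pos c hc n hn)).symm

end Aux

open Topology in
theorem d_tendsto :
    Filter.Tendsto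
      (fun n : ℕ =>
        1 / ((harmonic n : ℝ) - Real.log (n + 1 / 2) - Real.eulerMascheroniConstant) -
          24 * (n + 1 / 2 : ℝ) ^ 2)
      Filter.atTop (nhds (21 / 5)) := by
  have hL := invG_tendsto 1 (by norm_num)
  have hU := invG_tendsto (-1) (by norm_num)
  have hfeq : (fun n : ℕ =>
        1 / ((harmonic n : ℝ) - Real.log (n + 1 / 2) - Real.eulerMascheroniConstant) -
          24 * (n + 1 / 2 : ℝ) ^ 2)
      = fun n : ℕ => 1/(epsn n) - 24*((n:ℝ)+1/2)^2 := rfl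
  rw [hfeq]
  apply tendsto_of_tendsto_of_tendsto_of_le_of_le' hL hU
  · filter_upwards [eventually_ge_atTop 4] with n hn
    have h1 := epsn_le n
    have h2 := le_epsn n
    have hGm := Gf_pos (-1) (by norm_num) n hn
    have heps : 0 < epsn n := lt_of_lt_of_le hGm h2
    have h3 : 1/(Gf 1 n) ≤ 1/(epsn n) := one_div_le_one_div_of_le heps h1
    linarith
  · filter_upwards [eventually_ge_atTop 4] with n hn
    have h2 := le_epsn n
    have hGm := Gf_pos (-1) (by norm_num) n hn
    have h3 : 1/(epsn n) ≤ 1/(Gf (-1) n) := one_div_le_one_div_of_le hGm h2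
    linarith
end
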